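/- Let n ≥ 2 and let k, i, j satisfy 1 ≤ i < k and k+1 < j ≤ n. Set τ = (s_{k−1} s_{k−2} ⋯ s_i) ∘ (s_{k+1} s_{k+2} ⋯ s_{j−1}) ∈ S_n (equal to τ^{n,k}_{i,j}). Then each of the bigrassmannian elements u_m = s_k s_{k+1} ⋯ s_m for k ≤ m ≤ j−1 and v_l = s_k s_{k−1} ⋯ s_l for i ≤ l ≤ k−1 satisfies u ≤_B s_k ∘ τ and ¬(u ≤_B τ). -/
import Mathlib


/-- The adjacent transposition `s_l = (l, l+1)` (0-indexed), interpreted as the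
identity out of range. -/
def sT (n l : ℕ) : Equiv.Perm (Fin n) :=
  if h : l + 1 < n then Equiv.swap ⟨l, Nat.lt_of_succ_lt h⟩ ⟨l + 1, h⟩ else 1

/-- The product `s_a s_{a+1} ⋯ s_b`, composed right to left (identity if `b < a`). -/
def ascProd (n a b : ℕ) : Equiv.Perm (Fin n) :=
  ((List.range' a (b + 1 - a)).map (sT n)).prod

/-- The product `s_a s_{a-1} ⋯ s_b`, composed right to left (identity if `a < b`). -/
def descProd (n a b : ℕ) : Equiv.Perm (Fin n) :=
  ((List.range' b (a + 1 - b)).reverse.map (sT n)).prod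

/-- The Bruhat order on `S_n` via the rank-matrix criterion:
`u ≤_B w` iff for all `p q`, `#{i ≤ p : u i ≥ q} ≤ #{i ≤ p : w i ≥ q}`. -/
def bruhatLE {n : ℕ} (u w : Equiv.Perm (Fin n)) : Prop :=
  ∀ p q : Fin n,
    (Finset.univ.filter (fun i : Fin n => i ≤ p ∧ q ≤ u i)).card ≤
      (Finset.univ.filter (fun i : Fin n => i ≤ p ∧ q ≤ w i)).card

lemma sT_apply {n : ℕ} (l : ℕ) (h : l + 1 < n) (x : Fin n) :
    ((sT n l) x : ℕ) = if (x:ℕ) = l then l+1 else if (x:ℕ) = l+1 then l else (x:ℕ) := by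
  simp only [sT, dif_pos h, Equiv.swap_apply_def]
  split_ifs with h1 h2 h3 h4 <;>
    simp_all [Fin.ext_iff] <;> omega

lemma ascProd_apply {n : ℕ} {a b : ℕ} (hab : a ≤ b) :
    b + 1 < n → ∀ x : Fin n,
    ((ascProd n a b) x : ℕ) =
      if (x:ℕ) < a then (x:ℕ) else if (x:ℕ) ≤ b then (x:ℕ)+1
      else if (x:ℕ) = b+1 then a else (x:ℕ) := by
  induction b, hab using Nat.le_induction with
  | base =>
    intro hb x
    have h1 : ascProd n a a = sT n a := by
      unfold ascProd
      have : a + 1 - a = 1 := by omega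
      rw [this, List.range'_one, List.map_singleton, List.prod_singleton]
    rw [h1, sT_apply a hb x]
    split_ifs <;> omega
  | succ b hab IH =>
    intro hb x
    have key : ascProd n a (b+1) = ascProd n a b * sT n (b+1) := by
      unfold ascProd
      have h1 : b + 1 + 1 - a = (b + 1 - a) + 1 := by omega
      have h2 : a + (b + 1 - a) = b + 1 := by omega
      rw [h1, List.range'_1_concat, h2, List.map_append, List.prod_append,
        List.map_singleton, List.prod_singleton]
    rw [key, Equiv.Perm.mul_apply]
    have hx := sT_apply (b+1) hb x
    have hIH := IH (by omega) (sT n (b+1) x)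
    rw [hx] at hIH
    rw [hIH]
    split_ifs <;> omega

lemma descProd_apply {n : ℕ} {a b : ℕ} (hba : b ≤ a) :
    a + 1 < n → ∀ x : Fin n,
    ((descProd n a b) x : ℕ) =
      if (x:ℕ) < b then (x:ℕ) else if (x:ℕ) = b then a+1
      else if (x:ℕ) ≤ a+1 then (x:ℕ)-1 else (x:ℕ) := by
  induction a, hba using Nat.le_induction with
  | base =>
    intro ha x
    have h1 : descProd n b b = sT n b := by
      unfold descProd
      have : b + 1 - b = 1 := by omega
      rw [this, List.range'_one, List.reverse_singleton, List.map_singleton,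
        List.prod_singleton]
    rw [h1, sT_apply b ha x]
    split_ifs <;> omega
  | succ a hba IH =>
    intro ha x
    have key : descProd n (a+1) b = sT n (a+1) * descProd n a b := by
      unfold descProd
      have h1 : a + 1 + 1 - b = (a + 1 - b) + 1 := by omega
      have h2 : b + (a + 1 - b) = a + 1 := by omega
      rw [h1, List.range'_1_concat, h2, List.reverse_append,
        List.reverse_singleton, List.singleton_append, List.map_cons,
        List.prod_cons]
    rw [key, Equiv.Perm.mul_apply]
    have hin := IH (by omega) x
    have hout := sT_apply (a+1) ha (descProd n a b x)
    rw [hin] at hout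
    rw [hout]
    split_ifs <;> omega

def fU (k m : ℕ) : ℕ → ℕ := fun x =>
  if x < k then x else if x ≤ m then x+1 else if x = m+1 then k else x

def fV (k l : ℕ) : ℕ → ℕ := fun x =>
  if x < l then x else if x = l then k+1 else if x ≤ k+1 then x-1 else x

def fW (i k j : ℕ) : ℕ → ℕ := fun x =>
  if x < i then x else if x = i then k+1 else if x ≤ k then x-1
  else if x ≤ j-1 then x+1 else if x = j then k else x

def fT (i k j : ℕ) : ℕ → ℕ := fun x =>
  if x < i then x else if x = i then k else if x ≤ k then x-1
  else if x ≤ j-1 then x+1 else if x = j then k+1 else x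

lemma tau_apply {n i k j : ℕ} (hik : i < k) (hkj : k + 1 < j) (hj : j < n) (x : Fin n) :
    ((descProd n (k-1) i * ascProd n (k+1) (j-1)) x : ℕ) = fT i k j x := by
  have h1 := ascProd_apply (n := n) (a := k+1) (b := j-1) (by omega) (by omega) x
  have h2 := descProd_apply (n := n) (a := k-1) (b := i) (by omega) (by omega)
    ((ascProd n (k+1) (j-1)) x)
  rw [h1] at h2
  rw [Equiv.Perm.mul_apply, h2]
  unfold fT
  split_ifs <;> omega

lemma w_apply {n i k j : ℕ} (hik : i < k) (hkj : k + 1 < j) (hj : j < n) (x : Fin n) :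
    ((sT n k * (descProd n (k-1) i * ascProd n (k+1) (j-1))) x : ℕ) = fW i k j x := by
  have h1 := tau_apply (n := n) hik hkj hj x
  have h2 := sT_apply (n := n) k (by omega) ((descProd n (k-1) i * ascProd n (k+1) (j-1)) x)
  rw [h1] at h2
  rw [Equiv.Perm.mul_apply, h2]
  unfold fT fW
  split_ifs <;> omega

def cnt (f : ℕ → ℕ) (p q : ℕ) : ℕ :=
  ((Finset.range p).filter (fun x => q ≤ f x)).card

lemma cnt_zero (f : ℕ → ℕ) (q : ℕ) : cnt f 0 q = 0 := by
  simp [cnt]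

lemma cnt_succ (f : ℕ → ℕ) (p q : ℕ) :
    cnt f (p+1) q = cnt f p q + if q ≤ f p then 1 else 0 := by
  unfold cnt
  rw [Finset.range_add_one, Finset.filter_insert]
  split_ifs with h
  · rw [Finset.card_insert_of_notMem (by simp), Nat.add_comm]
  · simp

lemma card_eq_cnt {n : ℕ} (u : Equiv.Perm (Fin n)) (f : ℕ → ℕ)
    (hf : ∀ x : Fin n, (u x : ℕ) = f x) (p q : Fin n) :
    (Finset.univ.filter (fun x : Fin n => x ≤ p ∧ q ≤ u x)).card
      = cnt f ((p:ℕ)+1) (q:ℕ) := by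
  unfold cnt
  apply Finset.card_bij (fun (x : Fin n) _ => (x : ℕ))
  · intro a ha
    simp only [Finset.mem_filter, Finset.mem_univ, true_and] at ha
    simp only [Finset.mem_filter, Finset.mem_range]
    refine ⟨by have := ha.1; rw [Fin.le_def] at this; omega, ?_⟩
    rw [← hf a]
    exact ha.2
  · intro a _ b _ h
    exact Fin.ext h
  · intro b hb
    simp only [Finset.mem_filter, Finset.mem_range] at hb
    have hbn : b < n := lt_of_lt_of_le hb.1 (by omega)
    refine ⟨⟨b, hbn⟩, ?_, rfl⟩
    simp only [Finset.mem_filter, Finset.mem_univ, true_and]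
    refine ⟨by rw [Fin.le_def]; simp; omega, ?_⟩
    rw [Fin.le_def]
    simp [hf ⟨b, hbn⟩]
    exact hb.2

lemma cnt_fU {k m : ℕ} (hkm : k ≤ m) (q : ℕ) : ∀ p,
    cnt (fU k m) p q = (p - q) +
      (if k < p ∧ p ≤ m+1 ∧ k+1 ≤ q ∧ q ≤ p then 1 else 0) := by
  intro p
  induction p with
  | zero => rw [cnt_zero]; split_ifs <;> omega
  | succ p IH =>
    rw [cnt_succ, IH]
    unfold fU
    split_ifs <;> omega

lemma cnt_fV {k l : ℕ} (hlk : l ≤ k) (q : ℕ) : ∀ p,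
    cnt (fV k l) p q = (p - q) +
      (if l < p ∧ p ≤ k+1 ∧ p ≤ q ∧ q ≤ k+1 then 1 else 0) := by
  intro p
  induction p with
  | zero => rw [cnt_zero]; split_ifs <;> omega
  | succ p IH =>
    rw [cnt_succ, IH]
    unfold fV
    split_ifs <;> omega

lemma cnt_fW {i k j : ℕ} (hik : i < k) (hkj : k + 1 < j) (q : ℕ) : ∀ p,
    cnt (fW i k j) p q = (p - q) +
      (if (i < p ∧ p ≤ k+1 ∧ p ≤ q ∧ q ≤ k+1) ∨
          (k+1 < p ∧ p ≤ j ∧ k+1 ≤ q ∧ q ≤ p) then 1 else 0) := by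
  intro p
  induction p with
  | zero => rw [cnt_zero]; split_ifs <;> omega
  | succ p IH =>
    rw [cnt_succ, IH]
    unfold fW
    split_ifs <;> omega

lemma cnt_fT {i k j : ℕ} (hik : i < k) (hkj : k + 1 < j) :
    ∀ p, p ≤ k + 1 → cnt (fT i k j) p (k+1) = 0 := by
  intro p
  induction p with
  | zero => intro _; exact cnt_zero _ _
  | succ p IH =>
    intro hp
    rw [cnt_succ, IH (by omega)]
    have hle : fT i k j p ≤ k := by
      unfold fT; split_ifs <;> omega
    rw [if_neg (by omega)]

/-- For `i < k`, `k+1 < j ≤ n-1` and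
`τ = (s_{k-1} ⋯ s_i) ∘ (s_{k+1} ⋯ s_{j-1}) = τ^{n,k}_{i,j}`:
each of the bigrassmannian elements `u_m = s_k s_{k+1} ⋯ s_m` (`k ≤ m ≤ j-1`) and
`v_l = s_k s_{k-1} ⋯ s_l` (`i ≤ l ≤ k-1`) satisfies `u ≤_B s_k ∘ τ` and
`¬(u ≤_B τ)`. -/
theorem stmt11 (n k i j : ℕ) (hn : 2 ≤ n) (hik : i < k) (hkj : k + 1 < j) (hj : j < n) :
    (∀ m : ℕ, k ≤ m → m ≤ j - 1 →
      bruhatLE (ascProd n k m)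
        (sT n k * (descProd n (k - 1) i * ascProd n (k + 1) (j - 1))) ∧
      ¬ bruhatLE (ascProd n k m) (descProd n (k - 1) i * ascProd n (k + 1) (j - 1))) ∧
    (∀ l : ℕ, i ≤ l → l ≤ k - 1 →
      bruhatLE (descProd n k l)
        (sT n k * (descProd n (k - 1) i * ascProd n (k + 1) (j - 1))) ∧
      ¬ bruhatLE (descProd n k l) (descProd n (k - 1) i * ascProd n (k + 1) (j - 1))) := by
  have hfW := fun x => w_apply (n := n) hik hkj hj x
  have hfT := fun x => tau_apply (n := n) hik hkj hj x
  constructor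
  · intro m hkm hmj
    have hm1 : m + 1 < n := by omega
    have hfU : ∀ x : Fin n, ((ascProd n k m) x : ℕ) = fU k m x := by
      intro x
      rw [ascProd_apply hkm hm1 x]
      rfl
    constructor
    · intro p q
      rw [card_eq_cnt _ _ hfU p q, card_eq_cnt _ _ hfW p q,
        cnt_fU hkm, cnt_fW hik hkj]
      split_ifs <;> omega
    · intro hcon
      have h1 := hcon ⟨k, by omega⟩ ⟨k+1, by omega⟩
      rw [card_eq_cnt _ _ hfU, card_eq_cnt _ _ hfT] at h1
      simp only [Fin.val_mk] at h1
      rw [cnt_fU hkm, cnt_fT hik hkj (k+1) le_rfl] at h1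
      split_ifs at h1 <;> omega
  · intro l hil hlk
    have hlk' : l ≤ k := by omega
    have hk1 : k + 1 < n := by omega
    have hfV : ∀ x : Fin n, ((descProd n k l) x : ℕ) = fV k l x := by
      intro x
      rw [descProd_apply hlk' hk1 x]
      rfl
    constructor
    · intro p q
      rw [card_eq_cnt _ _ hfV p q, card_eq_cnt _ _ hfW p q,
        cnt_fV hlk', cnt_fW hik hkj]
      split_ifs <;> omega
    · intro hcon
      have h1 := hcon ⟨k, by omega⟩ ⟨k+1, by omega⟩
      rw [card_eq_cnt _ _ hfV, card_eq_cnt _ _ hfT] at h1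
      simp only [Fin.val_mk] at h1
      rw [cnt_fV hlk', cnt_fT hik hkj (k+1) le_rfl] at h1
      split_ifs at h1 <;> omega
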